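/- For the Nichols Hopf algebra K_m, and for r, s ∈ {0,1}, the space of K_m-module homomorphisms Hom_{K_m}(P_r, P_s) between the projective indecomposables has complex dimension 2^{m−1}. -/

import Mathlib

/-- Generators of the Nichols Hopf algebra `K_m`: the group-like `K` and the
skew-primitives `ξ_1, …, ξ_m`. -/
inductive NGen (m : ℕ) : Type
  | K : NGen m
  | xi : Fin m → NGen m

open FreeAlgebra in
/-- The defining relations of the Nichols Hopf algebra `K_m`. -/
inductive NRel (m : ℕ) : FreeAlgebra ℂ (NGen m) → FreeAlgebra ℂ (NGen m) → Prop
  | Ksq : NRel m (ι ℂ NGen.K * ι ℂ NGen.K) 1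
  | xisq (i : Fin m) : NRel m (ι ℂ (NGen.xi i) * ι ℂ (NGen.xi i)) 0
  | Kxi (i : Fin m) : NRel m (ι ℂ NGen.K * ι ℂ (NGen.xi i)) (-(ι ℂ (NGen.xi i) * ι ℂ NGen.K))
  | xixj (i j : Fin m) (h : i ≠ j) :
      NRel m (ι ℂ (NGen.xi i) * ι ℂ (NGen.xi j)) (-(ι ℂ (NGen.xi j) * ι ℂ (NGen.xi i)))

/-- The Nichols Hopf algebra `K_m` as a `ℂ`-algebra. -/
abbrev Km (m : ℕ) : Type := RingQuot (NRel m)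

/-- The group-like generator `K` of `K_m`. -/
noncomputable def KmK (m : ℕ) : Km m :=
  RingQuot.mkAlgHom ℂ (NRel m) (FreeAlgebra.ι ℂ NGen.K)

/-- The generators `ξ_i` of `K_m`. -/
noncomputable def Kmxi (m : ℕ) (i : Fin m) : Km m :=
  RingQuot.mkAlgHom ℂ (NRel m) (FreeAlgebra.ι ℂ (NGen.xi i))

/-- The idempotents `e_r = (1 + (−1)^r K)/2` of `K_m`, `r ∈ ℤ/2ℤ`. -/
noncomputable def Kme (m : ℕ) (r : ZMod 2) : Km m :=
  (2 : ℂ)⁻¹ • (1 + ((-1 : Km m)) ^ r.val * KmK m)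

/-- The projective indecomposable left `K_m`-module `P_r = K_m · e_r`. -/
noncomputable def KmP (m : ℕ) (r : ZMod 2) : Submodule (Km m) (Km m) :=
  Submodule.span (Km m) {Kme m r}

noncomputable instance (m : ℕ) (s : ZMod 2) : SMulCommClass (Km m) ℂ (KmP m s) :=
  ⟨fun a c x => Subtype.ext (smul_comm a c (x : Km m))⟩

noncomputable instance (m : ℕ) (r s : ZMod 2) :
    AddCommGroup ((KmP m r) →ₗ[Km m] (KmP m s)) := by
  exact @LinearMap.addCommGroup (Km m) (Km m) ↥(KmP m r) ↥(KmP m s) _ _ _ _ _ _ (RingHom.id _)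

namespace KmAux

variable {m : ℕ}

/-- index type for the monomial basis -/
abbrev Idx (m : ℕ) := Bool × Finset (Fin m)

abbrev V (m : ℕ) := Idx m →₀ ℂ

noncomputable def bV (m : ℕ) : Module.Basis (Idx m) ℂ (V m) := Finsupp.basisSingleOne

/-- `(-1)^a` -/
def csg (a : Bool) : ℂ := if a then -1 else 1

@[simp] lemma csg_not (a : Bool) : csg (!a) = -csg a := by cases a <;> simp [csg]

@[simp] lemma csg_false : csg false = 1 := rfl

/-- sign of inserting `ξ i` in front of the sorted product over `S` -/
def sg (i : Fin m) (S : Finset (Fin m)) : ℂ := (-1) ^ (S.filter (fun j => j < i)).card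

lemma sg_eq_one {i : Fin m} {S : Finset (Fin m)} (h : ∀ j ∈ S, i < j) : sg i S = 1 := by
  have : S.filter (fun j => j < i) = ∅ := by
    apply Finset.filter_eq_empty_iff.2
    intro j hj
    exact not_lt.2 (le_of_lt (h j hj))
  simp [sg, this]

lemma sg_insert {i j : Fin m} {S : Finset (Fin m)} (hj : j ∉ S) :
    sg i (insert j S) = (if j < i then -1 else 1) * sg i S := by
  unfold sg
  rw [Finset.filter_insert]
  by_cases h : j < i
  · rw [if_pos h, Finset.card_insert_of_notMem (by simp [Finset.mem_filter, hj]), if_pos h,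
      pow_succ, mul_comm]
  · rw [if_neg h, if_neg h, one_mul]

noncomputable def opK (m : ℕ) : Module.End ℂ (V m) :=
  (bV m).constr ℕ fun p => bV m (!p.1, p.2)

noncomputable def opXi (i : Fin m) : Module.End ℂ (V m) :=
  (bV m).constr ℕ fun p =>
    if i ∈ p.2 then 0 else (csg p.1 * sg i p.2) • bV m (p.1, insert i p.2)

@[simp] lemma opK_apply (p : Idx m) : opK m (bV m p) = bV m (!p.1, p.2) :=
  Module.Basis.constr_basis _ _ _ _

lemma opXi_apply (i : Fin m) (p : Idx m) :
    opXi i (bV m p)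
      = if i ∈ p.2 then 0 else (csg p.1 * sg i p.2) • bV m (p.1, insert i p.2) :=
  Module.Basis.constr_basis _ _ _ _

lemma opK_mul_opK : opK m * opK m = 1 := by
  apply (bV m).ext
  intro p
  simp [Module.End.mul_apply]

lemma opXi_mul_opXi (i : Fin m) : opXi (m := m) i * opXi i = 0 := by
  apply (bV m).ext
  intro p
  rcases p with ⟨a, S⟩
  rw [Module.End.mul_apply, opXi_apply]
  by_cases h : i ∈ S
  · simp [h]
  · rw [if_neg h, map_smul, opXi_apply]
    simp

lemma opK_mul_opXi (i : Fin m) : opK m * opXi i = -(opXi i * opK m) := by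
  apply (bV m).ext
  intro ⟨a, S⟩
  rw [Module.End.mul_apply, LinearMap.neg_apply, Module.End.mul_apply, opK_apply, opXi_apply,
    opXi_apply]
  by_cases h : i ∈ S
  · simp [h]
  · rw [if_neg h, if_neg h, map_smul, opK_apply]
    simp [csg_not, neg_smul]

lemma opXi_mul_opXj {i j : Fin m} (hij : i ≠ j) :
    opXi (m := m) i * opXi j = -(opXi j * opXi i) := by
  apply (bV m).ext
  intro ⟨a, S⟩
  rw [Module.End.mul_apply, LinearMap.neg_apply, Module.End.mul_apply, opXi_apply, opXi_apply]
  by_cases hj : j ∈ S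
  · by_cases hi : i ∈ S
    · simp [hi, hj]
    · rw [if_pos hj, if_neg hi, map_zero, map_smul, opXi_apply,
        if_pos (Finset.mem_insert_of_mem hj)]
      simp
  · by_cases hi : i ∈ S
    · rw [if_neg hj, if_pos hi, map_smul, map_zero, opXi_apply,
        if_pos (Finset.mem_insert_of_mem hi)]
      simp
    · rw [if_neg hj, if_neg hi, map_smul, map_smul, opXi_apply, opXi_apply,
        if_neg (by simp [hij, hi]), if_neg (by simp [Ne.symm hij, hj]),
        Finset.insert_comm, smul_smul, smul_smul, ← neg_smul]
      congr 1
      rw [sg_insert hj, sg_insert hi]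
      rcases lt_or_gt_of_ne hij with h | h
      · rw [if_neg (not_lt.2 h.le), if_pos h]
        ring
      · rw [if_pos h, if_neg (not_lt.2 h.le)]
        ring

end KmAux

namespace KmAux

variable {m : ℕ}

/-- the action of the generators -/
noncomputable def genOp (m : ℕ) : NGen m → Module.End ℂ (V m)
  | NGen.K => opK m
  | NGen.xi i => opXi i

/-- the representation of `K_m` on the vector space with basis indexed by `Idx m` -/
noncomputable def rep (m : ℕ) : Km m →ₐ[ℂ] Module.End ℂ (V m) :=
  RingQuot.liftAlgHom ℂ ⟨FreeAlgebra.lift ℂ (genOp m), by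
    intro x y h
    induction h with
    | Ksq => simp [FreeAlgebra.lift_ι_apply, genOp, opK_mul_opK]
    | xisq i => simp [FreeAlgebra.lift_ι_apply, genOp, opXi_mul_opXi]
    | Kxi i => simp [FreeAlgebra.lift_ι_apply, genOp, opK_mul_opXi]
    | xixj i j hij => simp [FreeAlgebra.lift_ι_apply, genOp, opXi_mul_opXj hij]⟩

@[simp] lemma rep_K : rep m (KmK m) = opK m := by
  rw [KmK, rep, RingQuot.liftAlgHom_mkAlgHom_apply]
  simp [genOp]

@[simp] lemma rep_xi (i : Fin m) : rep m (Kmxi m i) = opXi i := by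
  rw [Kmxi, rep, RingQuot.liftAlgHom_mkAlgHom_apply]
  simp [genOp]

/-- evaluation of the representation at the cyclic vector -/
noncomputable def theta (m : ℕ) : Km m →ₗ[ℂ] V m where
  toFun x := rep m x (bV m (false, ∅))
  map_add' x y := by simp
  map_smul' c x := by simp

lemma theta_apply (x : Km m) : theta m x = rep m x (bV m (false, ∅)) := rfl

/-- products of the `ξ` generators along a list -/
noncomputable def xiL (m : ℕ) (l : List (Fin m)) : Km m := (l.map (Kmxi m)).prod

@[simp] lemma xiL_nil : xiL m [] = 1 := rfl

@[simp] lemma xiL_cons (i : Fin m) (l : List (Fin m)) :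
    xiL m (i :: l) = Kmxi m i * xiL m l := by simp [xiL]

/-- the sorted product of `ξ` generators over a finset -/
noncomputable def xiS (m : ℕ) (S : Finset (Fin m)) : Km m := xiL m (S.sort (· ≤ ·))

@[simp] lemma xiS_empty : xiS m ∅ = 1 := by simp [xiS]

@[simp] lemma xiS_singleton (i : Fin m) : xiS m {i} = Kmxi m i := by
  simp [xiS, xiL]

lemma xiS_insert_min {j : Fin m} {S : Finset (Fin m)} (h : ∀ x ∈ S, j < x) :
    xiS m (insert j S) = Kmxi m j * xiS m S := by
  have hj : j ∉ S := fun hm => lt_irrefl j (h j hm)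
  rw [xiS, Finset.sort_insert _ (fun b hb => (h b hb).le) hj, xiL_cons]
  rfl

/-- power of K -/
noncomputable def Kb (m : ℕ) (a : Bool) : Km m := if a then KmK m else 1

/-- the monomials `K^a ξ_S` -/
noncomputable def mon (m : ℕ) (a : Bool) (S : Finset (Fin m)) : Km m := Kb m a * xiS m S

lemma rep_xiL_apply : ∀ (l : List (Fin m)), l.Pairwise (· < ·) →
    ∀ T : Finset (Fin m), (∀ x ∈ l, ∀ y ∈ T, x < y) →
    rep m (xiL m l) (bV m (false, T)) = bV m (false, T ∪ l.toFinset)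
  | [], _, T, _ => by simp
  | i :: l, hs, T, hT => by
    have hs' := (List.pairwise_cons.1 hs).2
    have hi : ∀ y ∈ l, i < y := (List.pairwise_cons.1 hs).1
    rw [xiL_cons, map_mul, Module.End.mul_apply,
      rep_xiL_apply l hs' T (fun x hx y hy => hT x (List.mem_cons_of_mem _ hx) y hy),
      rep_xi, opXi_apply]
    have hnotmem : i ∉ T ∪ l.toFinset := by
      simp only [Finset.mem_union, List.mem_toFinset]
      rintro (h | h)
      · exact lt_irrefl i (hT i List.mem_cons_self i h)
      · exact lt_irrefl i (hi i h)
    have hgt : ∀ j ∈ T ∪ l.toFinset, i < j := by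
      intro j hj
      rcases Finset.mem_union.1 hj with h | h
      · exact hT i List.mem_cons_self j h
      · exact hi j (List.mem_toFinset.1 h)
    rw [if_neg hnotmem, sg_eq_one hgt]
    simp [Finset.union_insert]

lemma theta_xiS (S : Finset (Fin m)) : theta m (xiS m S) = bV m (false, S) := by
  rw [theta_apply, xiS,
    rep_xiL_apply _ (Finset.sortedLT_sort S).pairwise ∅ (by simp)]
  simp [Finset.sort_toFinset]

lemma theta_mon (a : Bool) (S : Finset (Fin m)) : theta m (mon m a S) = bV m (a, S) := by
  have h := theta_xiS (m := m) S
  rw [theta_apply] at h ⊢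
  rw [mon, map_mul, Module.End.mul_apply, h]
  cases a
  · simp [Kb]
  · simp [Kb]

end KmAux

namespace KmAux

variable {m : ℕ}

lemma km_neg_mul (x y : Km m) : -x * y = -(x * y) := neg_mul x y

lemma km_mul_neg (x y : Km m) : x * -y = -(x * y) := mul_neg x y

lemma km_neg_smul (c : ℂ) (x : Km m) : (-c) • x = -(c • x) := neg_smul c x

lemma K_mul_K : KmK m * KmK m = 1 := by
  have h := RingQuot.mkAlgHom_rel ℂ (NRel.Ksq (m := m))
  rw [map_mul, map_one] at h
  exact h

lemma xi_mul_xi (i : Fin m) : Kmxi m i * Kmxi m i = 0 := by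
  have h := RingQuot.mkAlgHom_rel ℂ (NRel.xisq (m := m) i)
  rw [map_mul, map_zero] at h
  exact h

lemma K_mul_xi (i : Fin m) : KmK m * Kmxi m i = -(Kmxi m i * KmK m) := by
  have h := RingQuot.mkAlgHom_rel ℂ (NRel.Kxi (m := m) i)
  rw [map_mul, map_neg, map_mul] at h
  exact h

lemma xi_mul_K (i : Fin m) : Kmxi m i * KmK m = -(KmK m * Kmxi m i) := by
  rw [K_mul_xi, neg_neg]

lemma xi_mul_xj {i j : Fin m} (h : i ≠ j) :
    Kmxi m i * Kmxi m j = -(Kmxi m j * Kmxi m i) := by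
  have h := RingQuot.mkAlgHom_rel ℂ (NRel.xixj (m := m) i j h)
  rw [map_mul, map_neg, map_mul] at h
  exact h

/-- commuting a `ξ` generator into a sorted product -/
lemma xi_mul_xiS (S : Finset (Fin m)) : ∀ i : Fin m,
    Kmxi m i * xiS m S = if i ∈ S then 0 else sg i S • xiS m (insert i S) := by
  induction S using Finset.induction_on_min with
  | empty =>
    intro i
    simp [sg, xiS_singleton]
  | insert a S hlt IH =>
    intro i
    have haS : a ∉ S := fun h => lt_irrefl a (hlt a h)
    rw [xiS_insert_min hlt]
    rcases lt_trichotomy i a with h | rfl | h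
    · have hiS : i ∉ S := fun hi => lt_irrefl i (h.trans (hlt i hi))
      have hins : i ∉ insert a S := by simp [Finset.mem_insert, h.ne, hiS]
      have hltall : ∀ x ∈ insert a S, i < x := by
        intro x hx
        rcases Finset.mem_insert.1 hx with rfl | hx
        · exact h
        · exact h.trans (hlt x hx)
      rw [if_neg hins, sg_eq_one hltall, one_smul, xiS_insert_min hltall,
        xiS_insert_min hlt]
    · rw [if_pos (Finset.mem_insert_self _ _), ← mul_assoc, xi_mul_xi, zero_mul]
    · have hia : i ≠ a := h.ne'
      rw [← mul_assoc, xi_mul_xj hia, km_neg_mul, mul_assoc, IH i]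
      by_cases hiS : i ∈ S
      · rw [if_pos hiS, if_pos (Finset.mem_insert_of_mem hiS), mul_zero, neg_zero]
      · have hins : i ∉ insert a S := by simp [Finset.mem_insert, hia, hiS]
        have hltall : ∀ x ∈ insert i S, a < x := by
          intro x hx
          rcases Finset.mem_insert.1 hx with rfl | hx
          · exact h
          · exact hlt x hx
        rw [if_neg hins, if_neg hiS, mul_smul_comm, ← xiS_insert_min hltall,
          Finset.insert_comm, sg_insert haS, if_pos h, neg_one_mul, km_neg_smul]

/-- the span of the monomials is everything -/
lemma span_mon : Submodule.span ℂ (Set.range fun p : Idx m => mon m p.1 p.2) = ⊤ := by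
  set M := Submodule.span ℂ (Set.range fun p : Idx m => mon m p.1 p.2) with hM
  have hmem : ∀ a S, mon m a S ∈ M := fun a S =>
    Submodule.subset_span ⟨(a, S), rfl⟩
  have h1 : (1 : Km m) ∈ M := by
    have := hmem false ∅
    simpa [mon, Kb] using this
  have hmul : ∀ (u : Km m), (∀ a S, u * mon m a S ∈ M) → ∀ z ∈ M, u * z ∈ M := by
    intro u hu z hz
    induction hz using Submodule.span_induction with
    | mem x hx => obtain ⟨⟨a, S⟩, rfl⟩ := hx; exact hu a S
    | zero => rw [mul_zero]; exact zero_mem M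
    | add x y _ _ hx hy => rw [mul_add]; exact add_mem hx hy
    | smul c x _ hx => rw [mul_smul_comm]; exact Submodule.smul_mem M c hx
  have hK : ∀ a S, KmK m * mon m a S ∈ M := by
    intro a S
    cases a with
    | false => simpa [mon, Kb] using hmem true S
    | true =>
      have : KmK m * mon m true S = mon m false S := by
        rw [mon, mon]
        simp only [Kb, if_pos, if_neg, Bool.false_eq_true, ite_true, ite_false]
        rw [← mul_assoc, K_mul_K, one_mul]
      rw [this]
      exact hmem false S
  have mon_false : ∀ T : Finset (Fin m), mon m false T = xiS m T := by
    intro T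
    simp [mon, Kb]
  have hXi : ∀ (i : Fin m) a S, Kmxi m i * mon m a S ∈ M := by
    intro i a S
    cases a with
    | false =>
      rw [mon_false, xi_mul_xiS]
      by_cases hiS : i ∈ S
      · rw [if_pos hiS]; exact zero_mem M
      · rw [if_neg hiS, ← mon_false]
        exact Submodule.smul_mem M _ (hmem false (insert i S))
    | true =>
      have h1' : Kmxi m i * mon m true S = -(KmK m * (Kmxi m i * xiS m S)) := by
        rw [mon]
        simp only [Kb, ite_true]
        rw [← mul_assoc, xi_mul_K, km_neg_mul, mul_assoc]
      rw [h1', xi_mul_xiS]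
      by_cases hiS : i ∈ S
      · rw [if_pos hiS, mul_zero, neg_zero]; exact zero_mem M
      · rw [if_neg hiS, mul_smul_comm, ← km_neg_smul]
        have : KmK m * xiS m (insert i S) = mon m true (insert i S) := by
          simp [mon, Kb]
        rw [this]
        exact Submodule.smul_mem M _ (hmem true (insert i S))
  have key : ∀ y : FreeAlgebra ℂ (NGen m), ∀ z ∈ M,
      RingQuot.mkAlgHom ℂ (NRel m) y * z ∈ M := by
    intro y
    induction y using FreeAlgebra.induction with
    | grade0 c =>
      intro z hz
      have : (RingQuot.mkAlgHom ℂ (NRel m)) (algebraMap ℂ _ c) * z = c • z := by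
        rw [AlgHom.commutes, Algebra.smul_def]
      rw [this]
      exact Submodule.smul_mem M c hz
    | grade1 g =>
      cases g with
      | K => exact fun z hz => hmul (KmK m) hK z hz
      | xi i => exact fun z hz => hmul (Kmxi m i) (hXi i) z hz
    | mul x y hx hy =>
      intro z hz
      rw [map_mul, mul_assoc]
      exact hx _ (hy z hz)
    | add x y hx hy =>
      intro z hz
      rw [map_add, add_mul]
      exact add_mem (hx z hz) (hy z hz)
  rw [eq_top_iff]
  rintro x -
  obtain ⟨y, rfl⟩ := RingQuot.mkAlgHom_surjective ℂ (NRel m) x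
  simpa using key y 1 h1

end KmAux

namespace KmAux

variable {m : ℕ}

/-- `(-1)^r` as a complex scalar -/
def ec (r : ZMod 2) : ℂ := (-1) ^ r.val

@[simp] lemma ec_zero : ec 0 = 1 := by simp [ec]

@[simp] lemma ec_one : ec 1 = -1 := by simp [ec, ZMod.val_one]

lemma zmod2_cases (r : ZMod 2) : r = 0 ∨ r = 1 := by
  fin_cases r
  · exact Or.inl rfl
  · exact Or.inr rfl

lemma km_smul_mul (c : ℂ) (x y : Km m) : (c • x) * y = c • (x * y) := smul_mul_assoc c x y

lemma km_mul_smul (c : ℂ) (x y : Km m) : x * (c • y) = c • (x * y) := mul_smul_comm c x y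

lemma Kme_eq (r : ZMod 2) : Kme m r = (2 : ℂ)⁻¹ • (1 + ec r • KmK m) := by
  rcases zmod2_cases r with rfl | rfl
  · rw [Kme]
    norm_num
  · rw [Kme]
    have : ((-1 : Km m)) ^ (1 : ZMod 2).val * KmK m = (-1 : ℂ) • KmK m := by
      rw [ZMod.val_one, pow_one, km_neg_smul, one_smul, km_neg_mul, one_mul]
    rw [this, ec_one]

lemma K_mul_e (t : ZMod 2) : KmK m * Kme m t = ec t • Kme m t := by
  rw [Kme_eq, km_mul_smul, mul_add, mul_one, km_mul_smul, K_mul_K, smul_smul, smul_add,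
    smul_smul]
  rcases zmod2_cases t with rfl | rfl <;> · simp; module

lemma e_mul_K (t : ZMod 2) : Kme m t * KmK m = ec t • Kme m t := by
  rw [Kme_eq, km_smul_mul, add_mul, one_mul, km_smul_mul, K_mul_K, smul_smul, smul_add,
    smul_smul]
  rcases zmod2_cases t with rfl | rfl <;> · simp; module

lemma e_mul_e (r t : ZMod 2) : Kme m r * Kme m t = if r = t then Kme m r else 0 := by
  rw [Kme_eq r, km_smul_mul, add_mul, one_mul, km_smul_mul, K_mul_e, Kme_eq t]
  rcases zmod2_cases r with rfl | rfl <;> rcases zmod2_cases t with rfl | rfl <;>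
    · simp
      module

lemma e_idem (r : ZMod 2) : Kme m r * Kme m r = Kme m r := by
  rw [e_mul_e, if_pos rfl]

lemma xi_mul_e (i : Fin m) (t : ZMod 2) :
    Kmxi m i * Kme m t = Kme m (t + 1) * Kmxi m i := by
  rw [Kme_eq, Kme_eq, km_mul_smul, km_smul_mul, mul_add, mul_one, add_mul, one_mul,
    km_mul_smul, km_smul_mul, xi_mul_K]
  rcases zmod2_cases t with rfl | rfl
  · rw [show ((0 : ZMod 2) + 1) = 1 by decide]
    norm_num
    all_goals module
  · rw [show ((1 : ZMod 2) + 1) = 0 by decide]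
    norm_num
    all_goals module

lemma xiL_mul_e (t : ZMod 2) : ∀ l : List (Fin m),
    xiL m l * Kme m t = Kme m (t + (l.length : ZMod 2)) * xiL m l
  | [] => by simp
  | i :: l => by
    rw [xiL_cons, mul_assoc, xiL_mul_e t l, ← mul_assoc, xi_mul_e, mul_assoc]
    congr 2
    simp only [List.length_cons]
    push_cast
    ring

lemma xiS_mul_e (t : ZMod 2) (S : Finset (Fin m)) :
    xiS m S * Kme m t = Kme m (t + (S.card : ZMod 2)) * xiS m S := by
  rw [xiS, xiL_mul_e, Finset.length_sort]

lemma Kb_mul_e (a : Bool) (t : ZMod 2) :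
    Kb m a * Kme m t = (if a then ec t else 1) • Kme m t := by
  cases a
  · simp [Kb]
  · simp only [Kb, ite_true]
    exact K_mul_e t

lemma e_mul_Kb (t : ZMod 2) (a : Bool) :
    Kme m t * Kb m a = (if a then ec t else 1) • Kme m t := by
  cases a
  · simp [Kb]
  · simp only [Kb, ite_true]
    exact e_mul_K t

lemma pi_mon (r s : ZMod 2) (a : Bool) (S : Finset (Fin m)) :
    Kme m r * (mon m a S * Kme m s) =
      if r = s + (S.card : ZMod 2) then
        (if a then ec r else 1) • (Kme m r * xiS m S)
      else 0 := by
  rw [mon, mul_assoc, xiS_mul_e, ← mul_assoc, e_mul_Kb, km_smul_mul,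
    ← mul_assoc, e_mul_e]
  by_cases h : r = s + (S.card : ZMod 2)
  · rw [if_pos h, if_pos h]
  · rw [if_neg h, if_neg h, zero_mul, smul_zero]

end KmAux

namespace KmAux

variable {m : ℕ}

lemma theta_e_mul (r : ZMod 2) (S : Finset (Fin m)) :
    theta m (Kme m r * xiS m S)
      = (2 : ℂ)⁻¹ • (bV m (false, S) + ec r • bV m (true, S)) := by
  have hx : theta m (Kme m r * xiS m S) = rep m (Kme m r) (theta m (xiS m S)) := by
    rw [theta_apply, theta_apply, map_mul, Module.End.mul_apply]
  rw [hx, theta_xiS, Kme_eq, map_smul, map_add, map_one, map_smul, rep_K]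
  simp only [LinearMap.smul_apply, LinearMap.add_apply, Module.End.one_apply, opK_apply]
  rfl

/-- the coordinate projection onto the `(false, ·)` components -/
noncomputable def Lf (m : ℕ) : V m →ₗ[ℂ] (Finset (Fin m) →₀ ℂ) :=
  Finsupp.lcomapDomain (fun S : Finset (Fin m) => ((false : Bool), S))
    (fun _ _ h => congrArg Prod.snd h)

lemma bV_eq_single (p : Idx m) : bV m p = Finsupp.single p 1 := by
  rw [bV]
  exact congrFun Finsupp.coe_basisSingleOne p

lemma Lf_false (S : Finset (Fin m)) : Lf m (bV m (false, S)) = Finsupp.single S 1 := by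
  rw [bV_eq_single]
  exact Finsupp.comapDomain_single (fun S : Finset (Fin m) => ((false : Bool), S)) S 1 _

lemma Lf_true (S : Finset (Fin m)) : Lf m (bV m (true, S)) = 0 := by
  rw [bV_eq_single, Lf]
  unfold Finsupp.lcomapDomain
  ext T
  simp only [LinearMap.coe_mk, AddHom.coe_mk, Finsupp.comapDomain_apply, Finsupp.coe_zero,
    Pi.zero_apply]
  exact Finsupp.single_eq_of_ne (by simp)

lemma Lf_theta (r : ZMod 2) (S : Finset (Fin m)) :
    Lf m (theta m (Kme m r * xiS m S)) = (2 : ℂ)⁻¹ • Finsupp.single S 1 := by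
  rw [theta_e_mul, map_smul, map_add, map_smul, Lf_false, Lf_true, smul_zero, add_zero]

section Comb

variable (n : ℕ) (p : ZMod 2)

/-- parity-correcting embedding of subsets of `Fin n` into subsets of `Fin (n+1)` -/
def Fse (T : Finset (Fin n)) : Finset (Fin (n + 1)) :=
  if ((T.card : ZMod 2) = p) then T.map Fin.castSuccEmb
  else insert (Fin.last n) (T.map Fin.castSuccEmb)

lemma last_not_mem_map (T : Finset (Fin n)) : Fin.last n ∉ T.map Fin.castSuccEmb := by
  simp only [Finset.mem_map]
  rintro ⟨x, hx, hc⟩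
  exact absurd hc (Fin.castSucc_lt_last x).ne

lemma card_Fse (T : Finset (Fin n)) : ((Fse n p T).card : ZMod 2) = p := by
  rw [Fse]
  by_cases h : ((T.card : ZMod 2) = p)
  · rw [if_pos h, Finset.card_map]
    exact h
  · rw [if_neg h, Finset.card_insert_of_notMem (last_not_mem_map n T), Finset.card_map]
    push_cast
    revert h
    generalize ((T.card : ZMod 2)) = x
    revert x p
    decide

lemma mem_last_Fse (T : Finset (Fin n)) :
    Fin.last n ∈ Fse n p T ↔ ¬((T.card : ZMod 2) = p) := by
  rw [Fse]
  by_cases h : ((T.card : ZMod 2) = p)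
  · simp [if_pos h, h, last_not_mem_map n T]
  · simp [if_neg h, h]

lemma Fse_inj : Function.Injective (Fse n p) := by
  intro T1 T2 h
  by_cases h1 : ((T1.card : ZMod 2) = p) <;> by_cases h2 : ((T2.card : ZMod 2) = p)
  · rw [Fse, if_pos h1, Fse, if_pos h2] at h
    exact Finset.map_injective _ h
  · exfalso
    have := (mem_last_Fse n p T2).2 h2
    rw [← h, mem_last_Fse] at this
    exact this h1
  · exfalso
    have := (mem_last_Fse n p T1).2 h1
    rw [h, mem_last_Fse] at this
    exact this h2
  · rw [Fse, if_neg h1, Fse, if_neg h2] at h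
    have h' : T1.map Fin.castSuccEmb = T2.map Fin.castSuccEmb := by
      have e1 := congrArg (fun S => Finset.erase S (Fin.last n)) h
      simpa [Finset.erase_insert (last_not_mem_map n T1),
        Finset.erase_insert (last_not_mem_map n T2)] using e1
    exact Finset.map_injective _ h'

lemma Fse_surj (S : Finset (Fin (n + 1))) (hS : ((S.card : ZMod 2) = p)) :
    ∃ T, Fse n p T = S := by
  classical
  have hinj := (Fin.castSucc_injective n).injOn (s := (Fin.castSucc ⁻¹' (S : Set (Fin (n+1)))))
  refine ⟨S.preimage Fin.castSucc hinj, ?_⟩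
  have hmap : (S.preimage Fin.castSucc hinj).map Fin.castSuccEmb = S.erase (Fin.last n) := by
    ext x
    simp only [Finset.mem_map, Finset.mem_preimage, Finset.mem_erase]
    constructor
    · rintro ⟨y, hy, rfl⟩
      exact ⟨(Fin.castSucc_lt_last y).ne, hy⟩
    · rintro ⟨hne, hx⟩
      obtain ⟨y, rfl⟩ := Fin.exists_castSucc_eq.2 hne
      exact ⟨y, hx, rfl⟩
  set T := S.preimage Fin.castSucc hinj with hT
  by_cases hlast : Fin.last n ∈ S
  · have hcard : T.card = S.card - 1 := by
      have := Finset.card_map Fin.castSuccEmb (s := T)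
      rw [hmap, Finset.card_erase_of_mem hlast] at this
      omega
    have hS1 : 1 ≤ S.card := Finset.card_pos.2 ⟨_, hlast⟩
    have hcond : ¬ ((T.card : ZMod 2) = p) := by
      rw [hcard]
      intro hc
      rw [← hS] at hc
      have hcast : ((S.card - 1 : ℕ) : ZMod 2) + 1 = (S.card : ZMod 2) := by
        have : (S.card - 1) + 1 = S.card := by omega
        calc ((S.card - 1 : ℕ) : ZMod 2) + 1 = (((S.card - 1) + 1 : ℕ) : ZMod 2) := by push_cast; ring
        _ = (S.card : ZMod 2) := by rw [this]
      rw [hc] at hcast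
      revert hcast
      generalize (S.card : ZMod 2) = x
      revert x
      decide
    rw [Fse, if_neg hcond, hmap, Finset.insert_erase hlast]
  · have : T.map Fin.castSuccEmb = S := by
      rw [hmap, Finset.erase_eq_of_notMem hlast]
    have hcard : (T.card : ZMod 2) = p := by
      have hc := Finset.card_map Fin.castSuccEmb (s := T)
      rw [this] at hc
      rw [← hc]
      exact hS
    rw [Fse, if_pos hcard, this]

end Comb

end KmAux


namespace KmAux

variable {m : ℕ}

lemma mem_KmP {s : ZMod 2} {x : Km m} : x ∈ KmP m s ↔ ∃ a : Km m, a * Kme m s = x := by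
  rw [KmP, Submodule.mem_span_singleton]
  simp only [smul_eq_mul]

end KmAux

set_option maxHeartbeats 2000000 in
open KmAux in
/-- for `r, s ∈ ℤ/2ℤ`, the space `Hom_{K_m}(P_r, P_s)` of `K_m`-module
homomorphisms between the projective indecomposables has complex dimension `2^(m−1)`. -/
theorem Km_hom_finrank (m : ℕ) (hm : 1 ≤ m) (r s : ZMod 2) :
    Module.finrank ℂ ((KmP m r) →ₗ[Km m] (KmP m s)) = 2 ^ (m - 1) := by
  classical
  obtain ⟨n, rfl⟩ : ∃ n, m = n + 1 := ⟨m - 1, (Nat.succ_pred_eq_of_pos hm).symm⟩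
  -- the projection x ↦ e_r * x * e_s
  set piL : Km (n+1) →ₗ[ℂ] Km (n+1) :=
    (LinearMap.mulLeft ℂ (Kme (n+1) r)).comp (LinearMap.mulRight ℂ (Kme (n+1) s)) with hpiL
  have piL_apply : ∀ x, piL x = Kme (n+1) r * (x * Kme (n+1) s) := fun x => rfl
  -- the cyclic generator of P_r
  set er : KmP (n+1) r := ⟨Kme (n+1) r, mem_KmP.2 ⟨1, one_mul _⟩⟩ with her
  have hP : ∀ y : KmP (n+1) s, (y : Km (n+1)) * Kme (n+1) s = y := by
    rintro ⟨y, hy⟩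
    obtain ⟨a, rfl⟩ := mem_KmP.1 hy
    show a * Kme (n+1) s * Kme (n+1) s = a * Kme (n+1) s
    rw [mul_assoc, e_idem]
  have hsmul_er : (Kme (n+1) r) • er = er := Subtype.ext (by
    show Kme (n+1) r • (Kme (n+1) r) = Kme (n+1) r
    rw [smul_eq_mul, e_idem])
  have hphi : ∀ φ : (KmP (n+1) r) →ₗ[Km (n+1)] (KmP (n+1) s),
      Kme (n+1) r * (φ er : Km (n+1)) = (φ er : Km (n+1)) := by
    intro φ
    have h2 : φ (Kme (n+1) r • er) = Kme (n+1) r • φ er := map_smul φ _ _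
    rw [hsmul_er] at h2
    conv_rhs => rw [h2]
    rfl
  have hmemP : ∀ (x y : Km (n+1)), y ∈ LinearMap.range piL → x * y ∈ KmP (n+1) s := by
    rintro x - ⟨z, rfl⟩
    rw [piL_apply]
    refine mem_KmP.2 ⟨x * (Kme (n+1) r * z), ?_⟩
    rw [mul_assoc, mul_assoc]
  -- the equivalence Hom(P_r, P_s) ≃ e_r ⬝ K_m ⬝ e_s
  set To : ((KmP (n+1) r) →ₗ[Km (n+1)] (KmP (n+1) s)) →ₗ[ℂ] ↥(LinearMap.range piL) :=
  { toFun := fun φ => ⟨(φ er : Km (n+1)), ⟨(φ er : Km (n+1)), by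
      rw [piL_apply, hP (φ er), hphi φ]⟩⟩,
    map_add' := fun φ ψ => rfl,
    map_smul' := fun c φ => rfl } with hTo
  set Fro : ↥(LinearMap.range piL) →ₗ[ℂ] ((KmP (n+1) r) →ₗ[Km (n+1)] (KmP (n+1) s)) :=
  { toFun := fun y =>
    { toFun := fun q => ⟨(q : Km (n+1)) * (y : Km (n+1)), hmemP _ _ y.2⟩,
      map_add' := fun q1 q2 => Subtype.ext (add_mul _ _ _),
      map_smul' := fun a q => Subtype.ext (by
        show ((a • q : KmP (n+1) r) : Km (n+1)) * (y : Km (n+1))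
          = a • ((q : Km (n+1)) * (y : Km (n+1)))
        rw [SetLike.val_smul, smul_eq_mul, smul_eq_mul, mul_assoc]) },
    map_add' := fun y1 y2 => LinearMap.ext fun q => Subtype.ext (mul_add _ _ _),
    map_smul' := fun c y => LinearMap.ext fun q => Subtype.ext (by
      show (q : Km (n+1)) * ((c • y : ↥(LinearMap.range piL)) : Km (n+1))
        = c • ((q : Km (n+1)) * (y : Km (n+1)))
      rw [SetLike.val_smul]
      exact mul_smul_comm c _ _) } with hFro
  have h1 : To.comp Fro = LinearMap.id := by
    apply LinearMap.ext
    intro y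
    apply Subtype.ext
    show Kme (n+1) r * (y : Km (n+1)) = (y : Km (n+1))
    obtain ⟨z, hz⟩ := y.2
    rw [← hz, piL_apply, ← mul_assoc, e_idem]
  have h2 : Fro.comp To = LinearMap.id := by
    apply LinearMap.ext
    intro φ
    apply LinearMap.ext
    intro q
    apply Subtype.ext
    show (q : Km (n+1)) * (φ er : Km (n+1)) = ((φ q : KmP (n+1) s) : Km (n+1))
    obtain ⟨a, ha⟩ := mem_KmP.1 q.2
    have hq : q = a • er := Subtype.ext (by
      rw [SetLike.val_smul, her, smul_eq_mul]
      exact ha.symm)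
    rw [hq, map_smul]
    simp only [SetLike.val_smul, smul_eq_mul, her]
    rw [mul_assoc, hphi φ]
  have Ee : ((KmP (n+1) r) →ₗ[Km (n+1)] (KmP (n+1) s)) ≃ₗ[ℂ] ↥(LinearMap.range piL) :=
    LinearEquiv.ofLinear To Fro h1 h2
  rw [LinearEquiv.finrank_eq Ee]
  -- the independent spanning family of e_r K_m e_s
  set v : Finset (Fin n) → Km (n+1) :=
    fun T => Kme (n+1) r * xiS (n+1) (Fse n (r - s) T) with hv
  have hli : LinearIndependent ℂ v := by
    apply LinearIndependent.of_comp ((Lf (n+1)).comp (theta (n+1)))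
    have base := (Finsupp.basisSingleOne (R := ℂ) (ι := Finset (Fin (n+1)))).linearIndependent
    have comp := base.comp (Fse n (r - s)) (Fse_inj n (r - s))
    have hsm := comp.units_smul (fun _ : Finset (Fin n) => Units.mk0 ((2:ℂ)⁻¹) (by norm_num))
    have key : (⇑((Lf (n+1)).comp (theta (n+1))) ∘ v)
        = (fun _ : Finset (Fin n) => Units.mk0 ((2:ℂ)⁻¹) (by norm_num)) •
          (⇑(Finsupp.basisSingleOne (R := ℂ)) ∘ (Fse n (r - s))) := by
      funext T
      simp only [Function.comp_apply, LinearMap.comp_apply, hv, Pi.smul_apply',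
        Units.smul_def, Units.val_mk0, Finsupp.coe_basisSingleOne]
      exact Lf_theta r (Fse n (r - s) T)
    rw [key]
    exact hsm
  have hrange : LinearMap.range piL = Submodule.span ℂ (Set.range v) := by
    apply le_antisymm
    · rw [LinearMap.range_eq_map, ← span_mon, Submodule.map_span, Submodule.span_le]
      rintro - ⟨-, ⟨⟨a, S⟩, rfl⟩, rfl⟩
      rw [SetLike.mem_coe, piL_apply, pi_mon]
      by_cases h : r = s + (S.card : ZMod 2)
      · rw [if_pos h]
        have hpar : ((S.card : ZMod 2)) = r - s := by rw [h]; ring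
        obtain ⟨T, hT⟩ := Fse_surj n (r - s) S hpar
        apply Submodule.smul_mem
        apply Submodule.subset_span
        exact ⟨T, show Kme (n+1) r * xiS (n+1) (Fse n (r - s) T)
            = Kme (n+1) r * xiS (n+1) S by rw [hT]⟩
      · rw [if_neg h]
        exact (Submodule.span ℂ (Set.range v)).zero_mem
    · rw [Submodule.span_le]
      rintro - ⟨T, rfl⟩
      refine ⟨xiS (n+1) (Fse n (r - s) T), ?_⟩
      have hcond : s + (((Fse n (r - s) T).card : ℕ) : ZMod 2) = r := by
        rw [card_Fse]
        ring
      rw [piL_apply, xiS_mul_e, hcond, ← mul_assoc, e_idem]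
  have hfr : Module.finrank ℂ ↥(LinearMap.range piL) = 2 ^ n := by
    rw [hrange]
    have bb : Module.Basis (Finset (Fin n)) ℂ ↥(Submodule.span ℂ (Set.range v)) := Module.Basis.span hli
    rw [Module.finrank_eq_card_basis bb, Fintype.card_finset, Fintype.card_fin]
  rw [hfr]
  simp
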